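/- Let L : ℝⁿ × ℝⁿ → ℝ be C² and let q : [0, h] → ℝⁿ be a C² solution of the Euler–Lagrange equations for L with (q(0), q̇(0)) in a set on which L and its derivatives are bounded. Then the midpoint discrete Lagrangian satisfies |h·L((q(0)+q(h))/2, (q(h)−q(0))/h) − ∫₀ʰ L(q(t), q̇(t)) dt| ≤ C·h³ for a constant C independent of h, i.e., the midpoint rule has variational order at least 2 (in particular, it is consistent). -/

import Mathlib

open Set

private lemma abs_sub_le_uIcc' {m x t : ℝ} (ht : t ∈ Set.uIcc m x) : |t - m| ≤ |x - m| := by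
  rcases le_total m x with hmx | hmx
  · rw [Set.uIcc_of_le hmx] at ht
    rw [abs_of_nonneg (by linarith [ht.1]), abs_of_nonneg (by linarith)]
    linarith [ht.2]
  · rw [Set.uIcc_of_ge hmx] at ht
    rw [abs_of_nonpos (by linarith [ht.2]), abs_of_nonpos (by linarith)]
    linarith [ht.1]

private lemma two_eq_one_add_one' : (2 : WithTop ℕ∞) = 1 + 1 := by norm_num

private lemma three_eq_two_add_one' : (3 : WithTop ℕ∞) = 2 + 1 := by norm_num

private lemma contDiff_deriv_of_two' {F : Type*} [NormedAddCommGroup F] [NormedSpace ℝ F]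
    {f : ℝ → F} (hf : ContDiff ℝ 2 f) : ContDiff ℝ 1 (deriv f) :=
  (contDiff_succ_iff_deriv.mp (two_eq_one_add_one' ▸ hf)).2.2

private lemma contDiff_deriv_of_three' {F : Type*} [NormedAddCommGroup F] [NormedSpace ℝ F]
    {f : ℝ → F} (hf : ContDiff ℝ 3 f) : ContDiff ℝ 2 (deriv f) :=
  (contDiff_succ_iff_deriv.mp (three_eq_two_add_one' ▸ hf)).2.2

/-- First-order Taylor bound on an interval. -/
private lemma taylor1' {F : Type*} [NormedAddCommGroup F] [NormedSpace ℝ F]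
    {f : ℝ → F} (hf : ContDiff ℝ 2 f) {B m x : ℝ}
    (hB : ∀ t ∈ Set.uIcc m x, ‖deriv (deriv f) t‖ ≤ B) :
    ‖f x - f m - (x - m) • deriv f m‖ ≤ B * (x - m) ^ 2 := by
  have hdf : Differentiable ℝ f := hf.differentiable (by norm_num)
  have hdf2 : Differentiable ℝ (deriv f) :=
    (contDiff_deriv_of_two' hf).differentiable (by norm_num)
  have hB0 : 0 ≤ B := le_trans (norm_nonneg _) (hB m Set.left_mem_uIcc)
  have key : ∀ t ∈ Set.uIcc m x, ‖deriv f t - deriv f m‖ ≤ B * |x - m| := by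
    intro t ht
    have h1 : ‖deriv f t - deriv f m‖ ≤ B * ‖t - m‖ :=
      (convex_uIcc m x).norm_image_sub_le_of_norm_hasDerivWithin_le
        (fun y _ => (hdf2 y).hasDerivAt.hasDerivWithinAt) hB Set.left_mem_uIcc ht
    refine h1.trans ?_
    apply mul_le_mul_of_nonneg_left _ hB0
    simpa [Real.norm_eq_abs] using abs_sub_le_uIcc' ht
  have hG : ∀ t : ℝ, HasDerivAt
      (fun y => f y - f m - (y - m) • deriv f m) (deriv f t - deriv f m) t := by
    intro t
    have h1 : HasDerivAt (fun y : ℝ => (y - m) • deriv f m) (deriv f m) t := by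
      simpa using ((hasDerivAt_id t).sub_const m).smul_const (deriv f m)
    exact ((hdf t).hasDerivAt.sub_const (f m)).sub h1
  have hmain := (convex_uIcc m x).norm_image_sub_le_of_norm_hasDerivWithin_le
    (f' := fun t => deriv f t - deriv f m)
    (fun t _ => (hG t).hasDerivWithinAt) key Set.left_mem_uIcc Set.right_mem_uIcc
  have hfin : ‖f x - f m - (x - m) • deriv f m‖ ≤ B * |x - m| * ‖x - m‖ := by
    simpa using hmain
  refine hfin.trans (le_of_eq ?_)
  rw [Real.norm_eq_abs, mul_assoc, abs_mul_abs_self, sq]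

/-- Second-order Taylor bound on an interval. -/
private lemma taylor2' {F : Type*} [NormedAddCommGroup F] [NormedSpace ℝ F]
    {f : ℝ → F} (hf : ContDiff ℝ 3 f) {B m x : ℝ}
    (hB : ∀ t ∈ Set.uIcc m x, ‖deriv (deriv (deriv f)) t‖ ≤ B) :
    ‖f x - f m - (x - m) • deriv f m - ((x - m) ^ 2 / 2) • deriv (deriv f) m‖
      ≤ B * |x - m| ^ 3 := by
  have hf' : ContDiff ℝ 2 (deriv f) := contDiff_deriv_of_three' hf
  have hdf : Differentiable ℝ f := hf.differentiable (by norm_num)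
  have hB0 : 0 ≤ B := le_trans (norm_nonneg _) (hB m Set.left_mem_uIcc)
  have key : ∀ t ∈ Set.uIcc m x,
      ‖deriv f t - deriv f m - (t - m) • deriv (deriv f) m‖ ≤ B * (x - m) ^ 2 := by
    intro t ht
    have hsub : Set.uIcc m t ⊆ Set.uIcc m x :=
      Set.uIcc_subset_uIcc Set.left_mem_uIcc ht
    have h1 := taylor1' hf' (B := B) (m := m) (x := t) (fun s hs => hB s (hsub hs))
    refine h1.trans ?_
    apply mul_le_mul_of_nonneg_left _ hB0
    calc (t - m) ^ 2 = |t - m| ^ 2 := (sq_abs _).symm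
      _ ≤ |x - m| ^ 2 := by
          exact pow_le_pow_left₀ (abs_nonneg _) (abs_sub_le_uIcc' ht) 2
      _ = (x - m) ^ 2 := sq_abs _
  have hG : ∀ t : ℝ, HasDerivAt
      (fun y => f y - f m - (y - m) • deriv f m - ((y - m) ^ 2 / 2) • deriv (deriv f) m)
      (deriv f t - deriv f m - (t - m) • deriv (deriv f) m) t := by
    intro t
    have h1 : HasDerivAt (fun y : ℝ => (y - m) • deriv f m) (deriv f m) t := by
      simpa using ((hasDerivAt_id t).sub_const m).smul_const (deriv f m)
    have h2 : HasDerivAt (fun y : ℝ => (y - m) ^ 2 / 2) (t - m) t := by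
      have h := (((hasDerivAt_id t).sub_const m).pow 2).div_const 2
      simp only [id_eq, pow_one, mul_one] at h
      have h' : HasDerivAt (fun y : ℝ => (y - m) ^ 2 / 2) (↑2 * (t - m) ^ (2 - 1) / 2) t := h
      convert h' using 1
      norm_num
    exact (((hdf t).hasDerivAt.sub_const (f m)).sub h1).sub
      (h2.smul_const (deriv (deriv f) m))
  have hmain := (convex_uIcc m x).norm_image_sub_le_of_norm_hasDerivWithin_le
    (f' := fun t => deriv f t - deriv f m - (t - m) • deriv (deriv f) m)
    (fun t _ => (hG t).hasDerivWithinAt) key Set.left_mem_uIcc Set.right_mem_uIcc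
  have hfin : ‖f x - f m - (x - m) • deriv f m - ((x - m) ^ 2 / 2) • deriv (deriv f) m‖
      ≤ B * (x - m) ^ 2 * ‖x - m‖ := by
    simpa using hmain
  refine hfin.trans (le_of_eq ?_)
  rw [Real.norm_eq_abs, ← sq_abs]
  ring

set_option maxHeartbeats 2000000 in
/-- The midpoint discrete Lagrangian approximates the exact discrete Lagrangian
to third order in the step size along a C³ solution of the Euler–Lagrange
equations (variational order at least 2). -/
theorem midpoint_variational_order (n : ℕ)
    (L : ((Fin n → ℝ) × (Fin n → ℝ)) → ℝ) (hL : ContDiff ℝ 2 L)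
    (q : ℝ → (Fin n → ℝ)) (hq : ContDiff ℝ 3 q)
    (hEL : ∀ i : Fin n, ∀ t : ℝ,
      deriv (fun x => L (Function.update (q t) i x, deriv q t)) (q t i)
        - deriv (fun u => deriv (fun x => L (q u, Function.update (deriv q u) i x))
            (deriv q u i)) t = 0) :
    ∃ C : ℝ, ∀ h : ℝ, 0 < h → h ≤ 1 →
      |h * L ((fun i => (q 0 i + q h i)/2), (fun i => (q h i - q 0 i)/h))
        - ∫ t in (0:ℝ)..h, L (q t, deriv q t)| ≤ C * h^3 := by
  classical
  -- basic smoothness facts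
  have hq2 : ContDiff ℝ 2 q := hq.of_le (by norm_num)
  have hdq : ContDiff ℝ 2 (deriv q) := contDiff_deriv_of_three' hq
  have hg : ContDiff ℝ 2 (fun t => L (q t, deriv q t)) :=
    hL.comp (hq2.prodMk hdq)
  set g : ℝ → ℝ := fun t => L (q t, deriv q t) with hgdef
  -- continuity of the various derivatives
  have cq2 : Continuous (deriv (deriv q)) := hdq.continuous_deriv (by norm_num)
  have cq3 : Continuous (deriv (deriv (deriv q))) :=
    (contDiff_deriv_of_two' hdq).continuous_deriv le_rfl
  have cg2 : Continuous (deriv (deriv g)) :=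
    (contDiff_deriv_of_two' hg).continuous_deriv le_rfl
  have cqpair : Continuous (fun t => (q t, deriv q t)) :=
    (hq.continuous.prodMk hdq.continuous)
  -- bounds on the compact interval [0,1]
  obtain ⟨B2, hB2⟩ := (isCompact_Icc (a := (0:ℝ)) (b := 1)).exists_bound_of_continuousOn
    cq2.continuousOn
  obtain ⟨B3, hB3⟩ := (isCompact_Icc (a := (0:ℝ)) (b := 1)).exists_bound_of_continuousOn
    cq3.continuousOn
  obtain ⟨Bg, hBg⟩ := (isCompact_Icc (a := (0:ℝ)) (b := 1)).exists_bound_of_continuousOn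
    cg2.continuousOn
  obtain ⟨R0, hR0⟩ := (isCompact_Icc (a := (0:ℝ)) (b := 1)).exists_bound_of_continuousOn
    cqpair.continuousOn
  have h01 : (0:ℝ) ∈ Set.Icc (0:ℝ) 1 := by norm_num
  have hB2_0 : 0 ≤ B2 := le_trans (norm_nonneg _) (hB2 0 h01)
  have hB3_0 : 0 ≤ B3 := le_trans (norm_nonneg _) (hB3 0 h01)
  have hBg_0 : 0 ≤ Bg := le_trans (norm_nonneg _) (hBg 0 h01)
  have hR0_0 : 0 ≤ R0 := le_trans (norm_nonneg _) (hR0 0 h01)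
  -- radius and Lipschitz bound for L
  set R : ℝ := R0 + (B2 + B3) / 4 with hRdef
  have hR_0 : 0 ≤ R := by positivity
  have cLd : Continuous (fderiv ℝ L) := hL.continuous_fderiv (by norm_num)
  obtain ⟨K, hK⟩ := (isCompact_closedBall (0 : (Fin n → ℝ) × (Fin n → ℝ)) R)
    |>.exists_bound_of_continuousOn cLd.continuousOn
  have hK0 : 0 ≤ K := le_trans (norm_nonneg _)
    (hK 0 (Metric.mem_closedBall_self hR_0))
  have hLdiff : Differentiable ℝ L := hL.differentiable (by norm_num)
  refine ⟨K * ((B2 + B3) / 4) + Bg / 4, ?_⟩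
  intro h hpos hle
  have hne : h ≠ 0 := ne_of_gt hpos
  -- interval inclusions
  have hmem0 : (0:ℝ) ∈ Set.Icc (0:ℝ) 1 := h01
  have hmemh : h ∈ Set.Icc (0:ℝ) 1 := ⟨le_of_lt hpos, hle⟩
  have hmemm : h/2 ∈ Set.Icc (0:ℝ) 1 := ⟨by linarith, by linarith⟩
  have hsub1 : Set.uIcc (h/2) h ⊆ Set.Icc (0:ℝ) 1 := by
    rw [Set.uIcc_of_le (by linarith)]
    exact Set.Icc_subset_Icc (by linarith) (by linarith)
  have hsub0 : Set.uIcc (h/2) 0 ⊆ Set.Icc (0:ℝ) 1 := by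
    rw [Set.uIcc_of_ge (by linarith)]
    exact Set.Icc_subset_Icc le_rfl (by linarith)
  -- Taylor bounds for q at the midpoint
  have T1h := taylor1' hq2 (B := B2) (m := h/2) (x := h)
    (fun t ht => hB2 t (hsub1 ht))
  have T10 := taylor1' hq2 (B := B2) (m := h/2) (x := 0)
    (fun t ht => hB2 t (hsub0 ht))
  have T2h := taylor2' hq (B := B3) (m := h/2) (x := h)
    (fun t ht => hB3 t (hsub1 ht))
  have T20 := taylor2' hq (B := B3) (m := h/2) (x := 0)
    (fun t ht => hB3 t (hsub0 ht))
  -- bound on the first component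
  have cA : ‖(fun i => (q 0 i + q h i)/2) - q (h/2)‖ ≤ B2 / 4 * h ^ 2 := by
    have e : (fun i => (q 0 i + q h i)/2) - q (h/2)
        = ((1:ℝ)/2) • ((q h - q (h/2) - (h - h/2) • deriv q (h/2))
            + (q 0 - q (h/2) - (0 - h/2) • deriv q (h/2))) := by
      funext i
      simp only [Pi.sub_apply, Pi.add_apply, Pi.smul_apply, smul_eq_mul]
      ring
    rw [e, norm_smul]
    have hb : ‖(q h - q (h/2) - (h - h/2) • deriv q (h/2))
        + (q 0 - q (h/2) - (0 - h/2) • deriv q (h/2))‖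
        ≤ B2 * (h - h/2) ^ 2 + B2 * (0 - h/2) ^ 2 :=
      le_trans (norm_add_le _ _) (add_le_add T1h T10)
    have : ‖(1:ℝ)/2‖ = 1/2 := by norm_num [Real.norm_eq_abs]
    rw [this]
    calc (1/2 : ℝ) * ‖_ + _‖ ≤ (1/2 : ℝ) * (B2 * (h - h/2) ^ 2 + B2 * (0 - h/2) ^ 2) := by
          apply mul_le_mul_of_nonneg_left hb (by norm_num)
      _ = B2 / 4 * h ^ 2 := by ring
  -- bound on the second component
  have cB : ‖(fun i => (q h i - q 0 i)/h) - deriv q (h/2)‖ ≤ B3 / 4 * h ^ 2 := by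
    have e : (fun i => (q h i - q 0 i)/h) - deriv q (h/2)
        = ((1:ℝ)/h) • ((q h - q (h/2) - (h - h/2) • deriv q (h/2)
              - ((h - h/2) ^ 2 / 2) • deriv (deriv q) (h/2))
            - (q 0 - q (h/2) - (0 - h/2) • deriv q (h/2)
              - ((0 - h/2) ^ 2 / 2) • deriv (deriv q) (h/2))) := by
      funext i
      simp only [Pi.sub_apply, Pi.smul_apply, smul_eq_mul]
      field_simp
      ring
    rw [e, norm_smul]
    have hb : ‖(q h - q (h/2) - (h - h/2) • deriv q (h/2)
          - ((h - h/2) ^ 2 / 2) • deriv (deriv q) (h/2))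
        - (q 0 - q (h/2) - (0 - h/2) • deriv q (h/2)
          - ((0 - h/2) ^ 2 / 2) • deriv (deriv q) (h/2))‖
        ≤ B3 * |h - h/2| ^ 3 + B3 * |0 - h/2| ^ 3 :=
      le_trans (norm_sub_le _ _) (add_le_add T2h T20)
    have habs1 : |h - h/2| = h/2 := by rw [abs_of_nonneg (by linarith)]; ring
    have habs2 : |0 - h/2| = h/2 := by
      rw [abs_of_nonpos (by linarith)]; ring
    rw [habs1, habs2] at hb
    have hn1h : ‖(1:ℝ)/h‖ = 1/h := by
      rw [Real.norm_eq_abs, abs_of_nonneg (by positivity)]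
    rw [hn1h]
    calc (1/h) * ‖_ - _‖ ≤ (1/h) * (B3 * (h/2) ^ 3 + B3 * (h/2) ^ 3) := by
          apply mul_le_mul_of_nonneg_left hb (by positivity)
      _ = B3 / 4 * h ^ 2 := by field_simp; ring
  -- the two points fed to L
  set P : (Fin n → ℝ) × (Fin n → ℝ) :=
    ((fun i => (q 0 i + q h i)/2), (fun i => (q h i - q 0 i)/h)) with hPdef
  set Q : (Fin n → ℝ) × (Fin n → ℝ) := (q (h/2), deriv q (h/2)) with hQdef
  have hPQ : ‖P - Q‖ ≤ (B2 + B3) / 4 * h ^ 2 := by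
    rw [Prod.norm_def]
    apply max_le
    · refine cA.trans ?_
      apply mul_le_mul_of_nonneg_right _ (by positivity)
      linarith
    · refine cB.trans ?_
      apply mul_le_mul_of_nonneg_right _ (by positivity)
      linarith
  have hh2le : h ^ 2 ≤ 1 := by nlinarith
  have hQmem : Q ∈ Metric.closedBall (0 : (Fin n → ℝ) × (Fin n → ℝ)) R := by
    rw [Metric.mem_closedBall, dist_zero_right]
    refine le_trans (hR0 (h/2) hmemm) ?_
    rw [hRdef]
    have : 0 ≤ (B2 + B3) / 4 := by positivity
    linarith
  have hPmem : P ∈ Metric.closedBall (0 : (Fin n → ℝ) × (Fin n → ℝ)) R := by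
    rw [Metric.mem_closedBall, dist_zero_right]
    have h1 : ‖P‖ ≤ ‖P - Q‖ + ‖Q‖ := by
      have := norm_add_le (P - Q) Q
      rwa [sub_add_cancel] at this
    have h2 : ‖Q‖ ≤ R0 := hR0 (h/2) hmemm
    have h3 : ‖P - Q‖ ≤ (B2 + B3) / 4 := by
      refine hPQ.trans ?_
      have : 0 ≤ (B2 + B3) / 4 := by positivity
      nlinarith
    rw [hRdef]; linarith
  -- Lipschitz estimate for L between P and Q
  have hLip : ‖L P - L Q‖ ≤ K * ‖P - Q‖ :=
    (convex_closedBall _ _).norm_image_sub_le_of_norm_fderiv_le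
      (fun x _ => hLdiff.differentiableAt) hK hQmem hPmem
  have term1 : |L P - L Q| ≤ K * ((B2 + B3) / 4 * h ^ 2) := by
    rw [← Real.norm_eq_abs]
    exact hLip.trans (mul_le_mul_of_nonneg_left hPQ hK0)
  -- midpoint quadrature estimate
  have hgc : Continuous g := hg.continuous
  have hint1 : IntervalIntegrable g MeasureTheory.volume 0 h :=
    hgc.intervalIntegrable 0 h
  have e1 : (∫ t in (0:ℝ)..h, (t - h/2)) = 0 := by
    rw [intervalIntegral.integral_sub (continuous_id'.intervalIntegrable 0 h) intervalIntegrable_const,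
      integral_id, intervalIntegral.integral_const]
    simp only [smul_eq_mul]
    ring
  have e2 : (∫ t in (0:ℝ)..h, ((t - h/2) * deriv g (h/2))) = 0 := by
    rw [intervalIntegral.integral_mul_const, e1, zero_mul]
  have hint3 : IntervalIntegrable (fun t => (t - h/2) * deriv g (h/2))
      MeasureTheory.volume 0 h :=
    (((continuous_id.sub continuous_const).mul continuous_const).intervalIntegrable 0 h)
  have hI : (∫ t in (0:ℝ)..h, (g t - g (h/2) - (t - h/2) * deriv g (h/2)))
      = (∫ t in (0:ℝ)..h, g t) - h * g (h/2) := by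
    rw [intervalIntegral.integral_sub (hint1.sub intervalIntegrable_const) hint3, e2,
      sub_zero, intervalIntegral.integral_sub hint1 intervalIntegrable_const,
      intervalIntegral.integral_const]
    simp [smul_eq_mul]
  have hbound : ∀ t ∈ Set.uIoc (0:ℝ) h,
      ‖g t - g (h/2) - (t - h/2) * deriv g (h/2)‖ ≤ Bg / 4 * h ^ 2 := by
    intro t ht
    rw [Set.uIoc_of_le (le_of_lt hpos)] at ht
    have ht0 : 0 < t := ht.1
    have hth : t ≤ h := ht.2
    have hsubt : Set.uIcc (h/2) t ⊆ Set.Icc (0:ℝ) 1 := by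
      intro s hs
      rcases Set.mem_uIcc.mp hs with ⟨h1, h2⟩ | ⟨h1, h2⟩ <;>
        exact ⟨by linarith, by linarith⟩
    have hT := taylor1' hg (B := Bg) (m := h/2) (x := t)
      (fun s hs => hBg s (hsubt hs))
    have heq : g t - g (h/2) - (t - h/2) * deriv g (h/2)
        = g t - g (h/2) - (t - h/2) • deriv g (h/2) := by
      rw [smul_eq_mul]
    rw [heq]
    refine hT.trans ?_
    have hsq : (t - h/2) ^ 2 ≤ h ^ 2 / 4 := by
      have h1 : 0 ≤ t * (h - t) := mul_nonneg (le_of_lt ht0) (by linarith)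
      have h2 : h ^ 2 / 4 - (t - h/2) ^ 2 = t * (h - t) := by ring
      linarith
    calc Bg * (t - h/2) ^ 2 ≤ Bg * (h ^ 2 / 4) := mul_le_mul_of_nonneg_left hsq hBg_0
      _ = Bg / 4 * h ^ 2 := by ring
  have hIb : ‖∫ t in (0:ℝ)..h, (g t - g (h/2) - (t - h/2) * deriv g (h/2))‖
      ≤ Bg / 4 * h ^ 2 * |h - 0| :=
    intervalIntegral.norm_integral_le_of_norm_le_const hbound
  rw [hI] at hIb
  have habsh : |h - 0| = h := by rw [abs_of_nonneg (by linarith)]; ring_nf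
  rw [habsh] at hIb
  have term2 : |h * L Q - ∫ t in (0:ℝ)..h, g t| ≤ Bg / 4 * h ^ 3 := by
    have : h * L Q - ∫ t in (0:ℝ)..h, g t
        = -((∫ t in (0:ℝ)..h, g t) - h * g (h/2)) := by
      rw [hQdef]; simp [hgdef]
    rw [this, abs_neg, ← Real.norm_eq_abs]
    refine hIb.trans (le_of_eq ?_)
    ring
  -- final assembly
  have split : h * L P - ∫ t in (0:ℝ)..h, g t
      = h * (L P - L Q) + (h * L Q - ∫ t in (0:ℝ)..h, g t) := by ring
  calc |h * L P - ∫ t in (0:ℝ)..h, g t|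
      ≤ |h * (L P - L Q)| + |h * L Q - ∫ t in (0:ℝ)..h, g t| := by
        rw [split]; exact abs_add_le _ _
    _ ≤ h * (K * ((B2 + B3) / 4 * h ^ 2)) + Bg / 4 * h ^ 3 := by
        refine add_le_add ?_ term2
        rw [abs_mul, abs_of_nonneg (le_of_lt hpos)]
        exact mul_le_mul_of_nonneg_left term1 (le_of_lt hpos)
    _ = (K * ((B2 + B3) / 4) + Bg / 4) * h ^ 3 := by ring
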